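/- Let V be a compact set of functions analytic on D(0,R) with R > 1, such that f(1) ≠ 0 for every f ∈ V. Then there exists σ ∈ (1,R) such that f(σ) ≠ 0 for all f ∈ V. -/

import Mathlib

open Metric Set Filter

noncomputable def coeff (f : ℂ → ℂ) (k : ℕ) : ℂ := iteratedDeriv k f 0 / (k.factorial : ℂ)

noncomputable def hadamard (f g : ℂ → ℂ) : ℂ → ℂ := fun z => ∑' k : ℕ, coeff f k * coeff g k * z ^ k

def Pt (x : ℂ) (f : ℂ → ℂ) : ℂ → ℂ := fun z => f (x * z)

def A0 : Set (ℂ → ℂ) := {f | AnalyticOnNhd ℂ f (ball (0:ℂ) 1) ∧ f 0 = 1}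

def cm (V : Set (ℂ → ℂ)) : Set (ℂ → ℂ) := {h | ∃ f ∈ V, ∃ x : ℂ, ‖x‖ ≤ 1 ∧ h = Pt x f}

def dual (V : Set (ℂ → ℂ)) : Set (ℂ → ℂ) :=
  {g ∈ A0 | ∀ f ∈ V, ∀ z ∈ ball (0:ℂ) 1, hadamard f g z ≠ 0}

def eligible (g : ℂ → ℂ) : Prop := ∃ R > 1, AnalyticOnNhd ℂ g (ball (0:ℂ) R)

def VT (V : Set (ℂ → ℂ)) : Set (ℂ → ℂ) :=
  {g | eligible g ∧ g 0 = 1 ∧ ∀ f ∈ V, hadamard f g 1 ≠ 0}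

def perp (U : Set (ℂ → ℂ)) : Set (ℂ → ℂ) :=
  {h ∈ A0 | ∀ g ∈ U, hadamard g h 1 ≠ 0}

def lamSet (g : ℂ → ℂ) (V : Set (ℂ → ℂ)) : Set ℂ := (fun f => hadamard f g 1) '' V

def S (R : ℝ) : Set (Set ℂ) := {K | K ⊆ ball (0:ℂ) R ∧ IsCompact K}

noncomputable def closLU (R : ℝ) (U : Set (ℂ → ℂ)) : Set (ℂ → ℂ) :=
  (UniformOnFun.toFun (S R)) '' closure ((UniformOnFun.ofFun (S R)) '' U)

theorem stmt4 (R : ℝ) (hR : 1 < R)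
    (V : Set (ℂ → ℂ)) (hV : ∀ f ∈ V, AnalyticOnNhd ℂ f (ball (0:ℂ) R))
    (hc : IsCompact ((UniformOnFun.ofFun (S R)) '' V))
    (hnz : ∀ f ∈ V, f 1 ≠ 0) :
    ∃ σ : ℝ, σ ∈ Ioo 1 R ∧ ∀ f ∈ V, f (σ : ℂ) ≠ 0 := by
  by_contra hcon
  push_neg at hcon
  set r : ℝ := (1 + R) / 2 with hr
  have hr1 : 1 < r := by rw [hr]; linarith
  have hrR : r < R := by rw [hr]; linarith
  -- the sequence σ n
  set σn : ℕ → ℝ := fun n => 1 + (r - 1) / (n + 2) with hσn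
  have hσpos : ∀ n : ℕ, 0 < (r - 1) / ((n : ℝ) + 2) := fun n =>
    div_pos (by linarith) (by positivity)
  have hσle : ∀ n : ℕ, σn n ≤ r := by
    intro n
    have : (r - 1) / ((n : ℝ) + 2) ≤ r - 1 := by
      apply div_le_self (by linarith)
      have : (0:ℝ) ≤ (n:ℝ) := Nat.cast_nonneg n
      linarith
    simp only [hσn]; linarith
  have hσIoo : ∀ n : ℕ, σn n ∈ Ioo 1 R := fun n =>
    ⟨by have := hσpos n; simp only [hσn]; linarith, lt_of_le_of_lt (hσle n) hrR⟩
  have hσtend : Tendsto σn atTop (nhds 1) := by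
    have h0 : Tendsto (fun n : ℕ => (r - 1) / ((n : ℝ) + 2)) atTop (nhds 0) := by
      apply Tendsto.div_atTop (tendsto_const_nhds)
      exact tendsto_atTop_add_const_right _ 2 tendsto_natCast_atTop_atTop
    have := h0.const_add 1
    simpa using this
  -- choose zeros
  choose u hu hu0 using fun n => hcon (σn n) (hσIoo n)
  -- cluster point
  have hle : map (fun n => UniformOnFun.ofFun (S R) (u n)) atTop ≤
      𝓟 ((UniformOnFun.ofFun (S R)) '' V) := by
    rw [le_principal_iff, mem_map]
    exact Eventually.of_forall fun n => mem_image_of_mem _ (hu n)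
  obtain ⟨y, hy, hcl⟩ := hc.exists_clusterPt hle
  obtain ⟨g, hg, rfl⟩ := hy
  have hcl' : MapClusterPt (UniformOnFun.ofFun (S R) g) atTop
      (fun n => UniformOnFun.ofFun (S R) (u n)) := hcl
  -- g 1 ≠ 0, continuity at 1
  have h1mem : (1 : ℂ) ∈ ball (0:ℂ) R := by
    simp [mem_ball, dist_eq_norm]; exact hR
  have hgc : ContinuousAt g 1 := ((hV g hg) 1 h1mem).continuousAt
  set c : ℝ := ‖g 1‖ / 2 with hcdef
  have hcpos : 0 < c := by
    have := hnz g hg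
    have : 0 < ‖g 1‖ := norm_pos_iff.mpr this
    rw [hcdef]; linarith
  -- δ from continuity
  obtain ⟨δ, hδpos, hδ⟩ := Metric.continuousAt_iff.mp hgc c hcpos
  -- compact set K
  set K : Set ℂ := closedBall (0:ℂ) r with hK
  have hKS : K ∈ S R := ⟨fun x hx => by
      simp only [hK, mem_closedBall, mem_ball] at *; linarith,
    isCompact_closedBall _ _⟩
  -- the neighborhood
  have hVent : {p : ℂ × ℂ | dist p.1 p.2 < c} ∈ uniformity ℂ := dist_mem_uniformity hcpos
  have hU := UniformOnFun.gen_mem_nhds (α := ℂ) (β := ℂ) (𝔖 := S R) (UniformOnFun.ofFun (S R) g) hKS hVent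
  have hfreq := (mapClusterPt_iff_frequently.mp hcl') _ hU
  -- eventually σ n is close to 1
  have hev : ∀ᶠ n in atTop, dist (σn n) 1 < δ := by
    have := hσtend
    rw [Metric.tendsto_atTop] at this
    obtain ⟨N, hN⟩ := this δ hδpos
    exact eventually_atTop.mpr ⟨N, fun n hn => hN n hn⟩
  obtain ⟨n, hn1, hn2⟩ := (hfreq.and_eventually hev).exists
  -- derive contradiction at x = σn n
  have hxK : (σn n : ℂ) ∈ K := by
    simp only [hK, mem_closedBall, dist_eq_norm, sub_zero, Complex.norm_real,
      Real.norm_eq_abs]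
    rw [abs_of_pos (by have := (hσIoo n).1; linarith)]
    exact hσle n
  have hnear := hn1 (σn n : ℂ) hxK
  -- hnear : dist (g σn) (u n σn) < c (in the toFun sense)
  have hxδ : dist ((σn n : ℝ) : ℂ) (1 : ℂ) < δ := by
    rw [dist_eq_norm]
    have : ((σn n : ℝ) : ℂ) - 1 = ((σn n - 1 : ℝ) : ℂ) := by push_cast; ring
    rw [this, Complex.norm_real, Real.norm_eq_abs, ← Real.dist_eq]
    exact hn2
  have hgx := hδ hxδ
  -- ‖g σn‖ > c
  have hlow : c < ‖g ((σn n : ℝ) : ℂ)‖ := by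
    have htri : ‖g 1‖ ≤ ‖g ((σn n:ℝ):ℂ) - g 1‖ + ‖g ((σn n:ℝ):ℂ)‖ := by
      have := norm_sub_norm_le (g ((σn n:ℝ):ℂ) - g 1) (g ((σn n:ℝ):ℂ))
      calc ‖g 1‖ = ‖g ((σn n:ℝ):ℂ) - (g ((σn n:ℝ):ℂ) - g 1)‖ := by ring_nf
        _ ≤ ‖g ((σn n:ℝ):ℂ)‖ + ‖g ((σn n:ℝ):ℂ) - g 1‖ := norm_sub_le _ _
        _ = _ := by ring
    rw [dist_eq_norm] at hgx
    have : ‖g 1‖ = 2 * c := by rw [hcdef]; ring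
    linarith
  -- but dist at σn n < c and u n σn = 0
  have : dist (g ((σn n:ℝ):ℂ)) (u n ((σn n:ℝ):ℂ)) < c := hnear
  rw [hu0 n, dist_zero_right] at this
  linarith
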